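/- Let X be a compact Hausdorff space of covering dimension at most n. For any continuous map f : X → ℝ^{n+1} and any ε > 0, there exists a continuous g : X → ℝ^{n+1} with ‖f(x) − g(x)‖ < ε and g(x) ≠ 0 for all x ∈ X. -/
import Mathlib

open Finset Module

lemma gp_aux {E : Type*} [NormedAddCommGroup E] [NormedSpace ℝ E] [CompleteSpace E]
    [FiniteDimensional ℝ E] (n : ℕ) (hE : n + 1 ≤ finrank ℝ E)
    {ι : Type} [DecidableEq ι] (b : ι → E) (δ : ℝ) (hδ : 0 < δ) (s : Finset ι) :
    ∃ c : ι → E, (∀ i ∈ s, ‖c i - b i‖ < δ) ∧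
      ∀ t ⊆ s, t.card ≤ n + 1 → ∀ l : ι → ℝ,
        ∑ i ∈ t, l i • c i = 0 → ∀ i ∈ t, l i = 0 := by
  classical
  induction s using Finset.induction_on with
  | empty =>
    refine ⟨b, by simp, ?_⟩
    intro t ht _ l _ i hi
    simp [Finset.subset_empty.mp ht] at hi
  | @insert a s ha ih =>
    obtain ⟨c, hc, hind⟩ := ih
    set F : Finset (Finset ι) := s.powerset.filter (fun t => t.card ≤ n) with hF
    have hdense : Dense (⋂ t : {t // t ∈ F},
        ((Submodule.span ℝ (↑((t : Finset ι).image c) : Set E) : Set E))ᶜ) := by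
      apply dense_iInter_of_isOpen
      · rintro ⟨t, htF⟩
        exact (Submodule.closed_of_finiteDimensional _).isOpen_compl
      · rintro ⟨t, htF⟩
        rw [← interior_eq_empty_iff_dense_compl]
        by_contra h
        have htop := Submodule.eq_top_of_nonempty_interior'
          (Submodule.span ℝ (↑(t.image c) : Set E))
          (Set.nonempty_iff_ne_empty.mpr h)
        have h1 : finrank ℝ (Submodule.span ℝ (↑(t.image c) : Set E)) ≤ n := by
          refine le_trans (finrank_span_finset_le_card _) ?_
          exact le_trans (Finset.card_image_le) ((Finset.mem_filter.mp htF).2)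
        rw [htop, finrank_top] at h1
        omega
    obtain ⟨cnew, hcnew, hcd⟩ := Metric.mem_closure_iff.mp (hdense (b a)) δ hδ
    refine ⟨Function.update c a cnew, ?_, ?_⟩
    · intro i hi
      rcases Finset.mem_insert.mp hi with rfl | hi
      · rw [Function.update_self, ← dist_eq_norm, dist_comm]; exact hcd
      · rw [Function.update_of_ne (ne_of_mem_of_not_mem hi ha)]; exact hc i hi
    · intro t ht hcard l hsum i hit
      by_cases hat : a ∈ t
      · have ht's : t.erase a ⊆ s := fun j hj => by
          rcases Finset.mem_insert.mp (ht (Finset.mem_of_mem_erase hj)) with rfl | h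
          · exact absurd rfl (Finset.ne_of_mem_erase hj)
          · exact h
        have hcard' : (t.erase a).card ≤ n := by
          rw [Finset.card_erase_of_mem hat]; omega
        have hsum' : l a • cnew + ∑ j ∈ t.erase a, l j • c j = 0 := by
          rw [← hsum, ← Finset.add_sum_erase t _ hat, Function.update_self]
          congr 1
          refine Finset.sum_congr rfl fun j hj => ?_
          rw [Function.update_of_ne (ne_of_mem_of_not_mem (ht's hj) ha)]
        have hla : l a = 0 := by
          by_contra hla
          have hmem : ∑ j ∈ t.erase a, l j • c j
              ∈ Submodule.span ℝ (↑((t.erase a).image c) : Set E) :=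
            Submodule.sum_mem _ fun j hj => Submodule.smul_mem _ _
              (Submodule.subset_span (Finset.mem_coe.mpr (Finset.mem_image_of_mem c hj)))
          have hcnew_eq : cnew = (l a)⁻¹ • (-(∑ j ∈ t.erase a, l j • c j)) := by
            rw [eq_inv_smul_iff₀ hla]
            exact eq_neg_of_add_eq_zero_left hsum'
          have hmem2 : cnew ∈ Submodule.span ℝ (↑((t.erase a).image c) : Set E) := by
            rw [hcnew_eq]
            exact Submodule.smul_mem _ _ (Submodule.neg_mem _ hmem)
          have ht'F : t.erase a ∈ F := by
            rw [hF, Finset.mem_filter, Finset.mem_powerset]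
            exact ⟨ht's, hcard'⟩
          exact Set.mem_iInter.mp hcnew ⟨t.erase a, ht'F⟩ hmem2
        have hrest : ∀ j ∈ t.erase a, l j = 0 := by
          apply hind (t.erase a) ht's (by omega) l
          rw [hla, zero_smul, zero_add] at hsum'
          exact hsum'
        rcases eq_or_ne i a with rfl | hia
        · exact hla
        · exact hrest i (Finset.mem_erase.mpr ⟨hia, hit⟩)
      · have hts : t ⊆ s := fun j hj => by
          rcases Finset.mem_insert.mp (ht hj) with rfl | h
          · exact absurd hj hat
          · exact h
        refine hind t hts hcard l ?_ i hit
        rw [← hsum]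
        refine Finset.sum_congr rfl fun j hj => ?_
        rw [Function.update_of_ne (ne_of_mem_of_not_mem (hts hj) ha)]

/-- Covering dimension at most `n`: every open cover has an open refinement in which
each point lies in at most `n + 1` members. -/
def CovDimLE (X : Type) [TopologicalSpace X] (n : ℕ) : Prop :=
  ∀ 𝒰 : Set (Set X), (∀ U ∈ 𝒰, IsOpen U) → ⋃₀ 𝒰 = Set.univ →
    ∃ 𝒱 : Set (Set X), (∀ V ∈ 𝒱, IsOpen V) ∧ ⋃₀ 𝒱 = Set.univ ∧
      (∀ V ∈ 𝒱, ∃ U ∈ 𝒰, V ⊆ U) ∧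
      ∀ x : X, {V ∈ 𝒱 | x ∈ V}.Finite ∧ {V ∈ 𝒱 | x ∈ V}.ncard ≤ n + 1

set_option maxHeartbeats 1000000 in
theorem stmt_2 (n : ℕ) (X : Type) [TopologicalSpace X] [CompactSpace X] [T2Space X]
    (hdim : CovDimLE X n)
    (f : X → EuclideanSpace ℝ (Fin (n + 1))) (hf : Continuous f)
    (ε : ℝ) (hε : 0 < ε) :
    ∃ g : X → EuclideanSpace ℝ (Fin (n + 1)), Continuous g ∧
      ∀ x, ‖f x - g x‖ < ε ∧ g x ≠ 0 := by
  classical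
  set r : ℝ := ε / 4 with hr
  have hr0 : 0 < r := by positivity
  -- the initial cover by preimages of small balls
  set 𝒰 : Set (Set X) := Set.range (fun x => f ⁻¹' Metric.ball (f x) r) with h𝒰
  have h𝒰open : ∀ U ∈ 𝒰, IsOpen U := by
    rintro U ⟨x, rfl⟩; exact Metric.isOpen_ball.preimage hf
  have h𝒰cov : ⋃₀ 𝒰 = Set.univ := by
    apply Set.eq_univ_of_forall
    intro x
    exact ⟨f ⁻¹' Metric.ball (f x) r, ⟨x, rfl⟩, by simp [hr0]⟩
  obtain ⟨𝒱, h𝒱open, h𝒱cov, h𝒱ref, h𝒱mult⟩ := hdim 𝒰 h𝒰open h𝒰cov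
  -- finite subcover
  have hcovU : (Set.univ : Set X) ⊆ ⋃ V : 𝒱, (V : Set X) := by
    intro x _
    have : x ∈ ⋃₀ 𝒱 := h𝒱cov ▸ Set.mem_univ x
    obtain ⟨V, hV, hxV⟩ := this
    exact Set.mem_iUnion.mpr ⟨⟨V, hV⟩, hxV⟩
  obtain ⟨T, hT⟩ := isCompact_univ.elim_finite_subcover (fun V : 𝒱 => (V : Set X))
    (fun V => h𝒱open _ V.2) hcovU
  set ι := {V : 𝒱 // V ∈ T} with hι
  set U : ι → Set X := fun i => ((i : 𝒱) : Set X) with hU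
  have hUopen : ∀ i, IsOpen (U i) := fun i => h𝒱open _ (i : 𝒱).2
  have hUcov : (Set.univ : Set X) ⊆ ⋃ i, U i := by
    intro x hx
    have := hT hx
    rw [Set.mem_iUnion₂] at this
    obtain ⟨V, hVT, hxV⟩ := this
    exact Set.mem_iUnion.mpr ⟨⟨V, hVT⟩, hxV⟩
  -- partition of unity
  obtain ⟨ρ, hρ⟩ := PartitionOfUnity.exists_isSubordinate isClosed_univ U hUopen hUcov
  -- base points
  set b : ι → EuclideanSpace ℝ (Fin (n + 1)) := fun i => if h : (U i).Nonempty then f h.choose else 0 with hb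
  -- general position points
  have hfr : n + 1 ≤ finrank ℝ (EuclideanSpace ℝ (Fin (n + 1))) := by rw [finrank_euclideanSpace_fin]
  obtain ⟨c, hc, hgp⟩ := gp_aux n hfr b r hr0 Finset.univ
  -- the map
  refine ⟨fun x => ∑ i, ρ i x • c i, ?_, ?_⟩
  · exact continuous_finset_sum _ fun i _ => ((ρ i).continuous).smul continuous_const
  intro x
  have hone : ∑ i, ρ i x = 1 := by
    rw [← finsum_eq_sum_of_fintype]
    exact ρ.sum_eq_one (Set.mem_univ x)
  have hnn : ∀ i, 0 ≤ ρ i x := fun i => ρ.nonneg i x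
  have hsupp : ∀ i : ι, ρ i x ≠ 0 → x ∈ U i := fun i h =>
    hρ i (subset_tsupport _ h)
  have key : ∀ i : ι, ρ i x ≠ 0 → ‖f x - c i‖ < 3 * r := by
    intro i hi
    have hxU : x ∈ U i := hsupp i hi
    have hne : (U i).Nonempty := ⟨x, hxU⟩
    obtain ⟨W, hW𝒰, hsub⟩ := h𝒱ref _ (i : 𝒱).2
    obtain ⟨x₀, rfl⟩ := hW𝒰
    have hbi : b i = f hne.choose := by rw [hb]; simp [hne]
    have hpt : hne.choose ∈ U i := hne.choose_spec
    have h1 : dist (f x) (f hne.choose) < 2 * r := by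
      have ha : f x ∈ Metric.ball (f x₀) r := hsub hxU
      have hb' : f hne.choose ∈ Metric.ball (f x₀) r := hsub hpt
      rw [Metric.mem_ball] at ha hb'
      calc dist (f x) (f hne.choose) ≤ dist (f x) (f x₀) + dist (f x₀) (f hne.choose) :=
            dist_triangle _ _ _
        _ < r + r := by rw [dist_comm (f x₀) (f hne.choose)]; exact add_lt_add ha hb'
        _ = 2 * r := by ring
    have h2 : ‖c i - b i‖ < r := hc i (Finset.mem_univ i)
    calc ‖f x - c i‖ ≤ ‖f x - b i‖ + ‖b i - c i‖ := norm_sub_le_norm_sub_add_norm_sub _ _ _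
      _ < 2 * r + r := by
          rw [hbi, ← dist_eq_norm]
          rw [norm_sub_rev] at h2
          rw [hbi] at h2
          exact add_lt_add h1 h2
      _ = 3 * r := by ring
  constructor
  · -- approximation
    have heq : f x - ∑ i, ρ i x • c i = ∑ i, ρ i x • (f x - c i) := by
      simp only [smul_sub, Finset.sum_sub_distrib, ← Finset.sum_smul, hone, one_smul]
    rw [heq]
    calc ‖∑ i, ρ i x • (f x - c i)‖ ≤ ∑ i, ‖ρ i x • (f x - c i)‖ := norm_sum_le _ _
      _ ≤ ∑ i, ρ i x * (3 * r) := by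
          apply Finset.sum_le_sum
          intro i _
          rw [norm_smul, Real.norm_eq_abs, abs_of_nonneg (hnn i)]
          by_cases h : ρ i x = 0
          · simp [h]
          · exact mul_le_mul_of_nonneg_left (le_of_lt (key i h)) (hnn i)
      _ = 3 * r := by rw [← Finset.sum_mul, hone, one_mul]
      _ < ε := by rw [hr]; linarith
  · -- nonvanishing
    intro hg
    set t0 : Finset ι := Finset.univ.filter (fun i => ρ i x ≠ 0) with ht0
    have hinj : Function.Injective (fun i : ι => ((i : 𝒱) : Set X)) := by
      intro i j h
      exact Subtype.ext (Subtype.ext h)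
    have hcard : t0.card ≤ n + 1 := by
      have himg : ↑(t0.image (fun i : ι => ((i : 𝒱) : Set X))) ⊆ {V ∈ 𝒱 | x ∈ V} := by
        intro V hV
        rw [Finset.coe_image] at hV
        obtain ⟨i, hi, rfl⟩ := hV
        rw [Finset.mem_coe, ht0, Finset.mem_filter] at hi
        exact ⟨(i : 𝒱).2, hsupp i hi.2⟩
      have h1 := Set.ncard_le_ncard himg (h𝒱mult x).1
      rw [Set.ncard_coe_finset, Finset.card_image_of_injective _ hinj] at h1
      exact le_trans h1 (h𝒱mult x).2
    have hsum0 : ∑ i ∈ t0, ρ i x • c i = 0 := by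
      rw [← hg]
      apply Finset.sum_subset (Finset.subset_univ t0)
      intro i _ hi
      rw [ht0, Finset.mem_filter, not_and] at hi
      have : ρ i x = 0 := not_not.mp (hi (Finset.mem_univ i))
      simp [this]
    have hzero := hgp t0 (Finset.subset_univ t0) hcard (fun i => ρ i x) hsum0
    have : (1 : ℝ) = 0 := by
      rw [← hone]
      rw [← Finset.sum_subset (Finset.subset_univ t0) (fun i _ hi => by
        rw [ht0, Finset.mem_filter, not_and] at hi
        exact not_not.mp (hi (Finset.mem_univ i)))]
      exact Finset.sum_eq_zero hzero
    norm_num at this
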